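/- For every real y > 0, Im[S₃(iy)] > 0; equivalently, Im[ψ₂(iy)] < 0 for all y > 0. -/

import Mathlib

open Complex

/-- `S j z = ∑_{k=0}^∞ 1/(z+k)^j`, the series defining the polygamma functions:
`ψ₂ = −2S₃`. -/
noncomputable def S (j : ℕ) (z : ℂ) : ℂ := ∑' k : ℕ, 1 / (z + k) ^ j

/-! ### Auxiliary real lemmas -/

lemma step_ineq (y a : ℝ) (hy : 0 < y) (ha : 0 ≤ a) :
    1 / Real.sqrt ((a+1)^2 + y^2) ^ 3 ≤
      (1/y^2) * ((a+1) / Real.sqrt ((a+1)^2 + y^2) - a / Real.sqrt (a^2 + y^2)) := by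
  set A := Real.sqrt (a^2 + y^2) with hAdef
  set B := Real.sqrt ((a+1)^2 + y^2) with hBdef
  have hA2 : A^2 = a^2 + y^2 := Real.sq_sqrt (by positivity)
  have hB2 : B^2 = (a+1)^2 + y^2 := Real.sq_sqrt (by positivity)
  have hApos : 0 < A := Real.sqrt_pos.2 (by positivity)
  have hBpos : 0 < B := Real.sqrt_pos.2 (by positivity)
  have hAB : A ≤ B := Real.sqrt_le_sqrt (by nlinarith)
  have core : (a+1)*A^2 + a*(A*B) ≤ ((a+1)^2 - a^2) * B^2 := by nlinarith [sq_nonneg (A - B)]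
  have hkey : ((a+1)*A - a*B) * ((a+1)*A + a*B) = y^2 * ((a+1)^2 - a^2) := by nlinarith []
  have hP : 0 < (a+1)*A + a*B := by positivity
  have hR : (((a+1)*A - a*B)*B^3)*((a+1)*A + a*B) = (y^2*((a+1)^2-a^2))*B^3 := by
    linear_combination B^3 * hkey
  have hL : (y^2*(B*A))*((a+1)*A + a*B) ≤ (y^2*((a+1)^2-a^2))*B^3 := by
    have h := mul_le_mul_of_nonneg_left core (show (0:ℝ) ≤ y^2*B by positivity)
    nlinarith [h]
  have goal2 : y^2*(B*A) ≤ ((a+1)*A - a*B)*B^3 :=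
    le_of_mul_le_mul_right (by linarith) hP
  rw [div_sub_div _ _ (ne_of_gt hBpos) (ne_of_gt hApos), div_mul_div_comm, one_mul,
    div_le_div_iff₀ (by positivity) (by positivity), one_mul]
  nlinarith [goal2]

lemma summable_b (y : ℝ) (hy : 0 < y) :
    Summable (fun k : ℕ => 1 / Real.sqrt (((k:ℝ)+1)^2 + y^2) ^ 3) := by
  have h : Summable (fun k : ℕ => 1 / ((k:ℝ)+1) ^ 3) := by
    have := (summable_nat_add_iff (f := fun n : ℕ => 1 / (n:ℝ)^3) 1).2
      (Real.summable_one_div_nat_pow.2 (by norm_num))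
    simpa using this
  apply h.of_nonneg_of_le (fun k => by positivity)
  intro k
  apply one_div_le_one_div_of_le (by positivity)
  gcongr
  calc ((k:ℝ)+1) = Real.sqrt (((k:ℝ)+1)^2) := by
        rw [Real.sqrt_sq (by positivity)]
    _ ≤ Real.sqrt (((k:ℝ)+1)^2 + y^2) := Real.sqrt_le_sqrt (by nlinarith)

lemma sum_b_le (y : ℝ) (hy : 0 < y) :
    (∑' k : ℕ, 1 / Real.sqrt (((k:ℝ)+1)^2 + y^2) ^ 3) ≤ 1/y^2 := by
  apply Real.tsum_le_of_sum_range_le (fun k => by positivity)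
  intro n
  have key : ∀ m : ℕ, ∑ k ∈ Finset.range m, 1 / Real.sqrt (((k:ℝ)+1)^2 + y^2) ^ 3
      ≤ (1/y^2) * ((m:ℝ) / Real.sqrt ((m:ℝ)^2 + y^2)) := by
    intro m
    induction m with
    | zero => simp
    | succ n ih =>
      rw [Finset.sum_range_succ]
      have h := step_ineq y n hy (by positivity)
      push_cast
      calc _ ≤ (1/y^2) * ((n:ℝ) / Real.sqrt ((n:ℝ)^2 + y^2))
            + 1 / Real.sqrt (((n:ℝ)+1)^2 + y^2) ^ 3 := by gcongr
        _ ≤ _ := by nlinarith [h]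
  calc _ ≤ (1/y^2) * ((n:ℝ) / Real.sqrt ((n:ℝ)^2 + y^2)) := key n
    _ ≤ (1/y^2) * 1 := by
        gcongr
        rw [div_le_one (Real.sqrt_pos.2 (by positivity))]
        calc (n:ℝ) = Real.sqrt ((n:ℝ)^2) := by rw [Real.sqrt_sq (by positivity)]
          _ ≤ _ := Real.sqrt_le_sqrt (by nlinarith)
    _ = 1/y^2 := by ring

/-! ### Auxiliary complex lemmas -/

lemma abs_aux (y x : ℝ) : ‖((x:ℂ) + (y:ℂ)*I)‖ = Real.sqrt (x^2+y^2) := by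
  rw [Complex.norm_def]
  congr 1
  simp [Complex.normSq_apply]
  ring

lemma ne_aux (y x : ℝ) (hy : y ≠ 0) : ((x:ℂ) + (y:ℂ)*I) ≠ 0 := by
  intro h
  have := congrArg Complex.im h
  simp at this
  exact hy this

lemma tel_id (w : ℂ) (h0 : w ≠ 0) (h1 : w + 1 ≠ 0) (h2 : w + 2 ≠ 0) :
    1/(w+1)^3 = (1/2)*(1/(w*(w+1)) - 1/((w+1)*(w+2))) - 1/((w+1)^3*((w+1)^2 - 1)) := by
  have hsq : (w+1)^2 - 1 = w*(w+2) := by ring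
  have e1 : (1/2 : ℂ)*(1/(w*(w+1)) - 1/((w+1)*(w+2))) = 1/(w*(w+1)*(w+2)) := by
    field_simp; ring
  have e2 : 1/((w+1)^3*(w*(w+2))) = 1/(w*(w+1)*(w+2)) - 1/(w+1)^3 := by
    field_simp; ring
  rw [hsq, e1, e2]; ring


/-- For every real `y > 0`, `Im[S₃(iy)] > 0`; equivalently `Im[ψ₂(iy)] < 0`. -/
theorem im_S3_pos (y : ℝ) (hy : 0 < y) :
    0 < (S 3 ((y : ℂ) * I)).im ∧ ((-2 : ℂ) * S 3 ((y : ℂ) * I)).im < 0 := by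
  have hyne : y ≠ 0 := ne_of_gt hy
  set z : ℂ := (y:ℂ)*I with hz
  set f : ℕ → ℂ := fun k => 1/(z + (k:ℕ))^3 with hfdef
  set u : ℕ → ℂ := fun k => 1/((z+(k:ℕ))*(z+(k:ℕ)+1)) with hudef
  set r : ℕ → ℂ := fun k => 1/((z+(k:ℕ)+1)^3*((z+(k:ℕ)+1)^2 - 1)) with hrdef
  -- rewriting shapes
  have hw : ∀ k:ℕ, z + (k:ℕ) = (((k:ℝ)):ℂ) + (y:ℂ)*I := by intro k; rw [hz]; push_cast; ring
  have hw1 : ∀ k:ℕ, z + (k:ℕ) + 1 = ((((k:ℝ)+1):ℝ):ℂ) + (y:ℂ)*I := by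
    intro k; rw [hz]; push_cast; ring
  have hw2 : ∀ k:ℕ, z + (k:ℕ) + 2 = ((((k:ℝ)+2):ℝ):ℂ) + (y:ℂ)*I := by
    intro k; rw [hz]; push_cast; ring
  -- telescoping identity
  have hid : ∀ k:ℕ, f (k+1) = (1/2)*(u k - u (k+1)) - r k := by
    intro k
    have h0 : z + (k:ℕ) ≠ 0 := by rw [hw k]; exact ne_aux y _ hyne
    have h1 : z + (k:ℕ) + 1 ≠ 0 := by rw [hw1 k]; exact ne_aux y _ hyne
    have h2 : z + (k:ℕ) + 2 ≠ 0 := by rw [hw2 k]; exact ne_aux y _ hyne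
    have ht := tel_id (z + (k:ℕ)) h0 h1 h2
    simp only [hfdef, hudef, hrdef]
    push_cast
    convert ht using 2 <;> ring_nf
  -- summability
  have hb := summable_b y hy
  have hfnorm : ∀ k:ℕ, ‖f (k+1)‖ = 1/Real.sqrt (((k:ℝ)+1)^2+y^2)^3 := by
    intro k
    simp only [hfdef]
    rw [show z + ((k+1:ℕ):ℂ) = ((((k:ℝ)+1):ℝ):ℂ) + (y:ℂ)*I by rw [hz]; push_cast; ring,
      norm_div, norm_one, norm_pow, abs_aux]
  have hf1 : Summable (fun k => f (k+1)) :=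
    Summable.of_norm (hb.congr fun k => (hfnorm k).symm)
  have hf : Summable f := (summable_nat_add_iff 1).1 hf1
  -- bound on r
  have hrbound : ∀ k:ℕ, ‖r k‖ ≤ (1/(2*y)) * (1/Real.sqrt (((k:ℝ)+1)^2+y^2)^3) := by
    intro k
    simp only [hrdef]
    rw [hw1 k, norm_div, norm_one, norm_mul, norm_pow,
      abs_aux]
    set Bk := Real.sqrt (((k:ℝ)+1)^2 + y^2) with hBk
    have hBpos : 0 < Bk := Real.sqrt_pos.2 (by positivity)
    have h2y : 2*y ≤ ‖(((((k:ℝ)+1):ℝ):ℂ) + (y:ℂ)*I)^2 - 1‖ := by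
      have habs := Complex.abs_im_le_norm ((((((k:ℝ)+1):ℝ):ℂ) + (y:ℂ)*I)^2 - 1)
      have him : (((((((k:ℝ)+1):ℝ):ℂ) + (y:ℂ)*I)^2 - 1)).im = 2*((k:ℝ)+1)*y := by
        simp [Complex.sub_im, pow_two, Complex.mul_im, Complex.add_im, Complex.add_re,
          Complex.ofReal_re, Complex.ofReal_im, Complex.mul_re, Complex.I_re, Complex.I_im]
        ring
      rw [him] at habs
      have h1 : 2*y ≤ |2*((k:ℝ)+1)*y| := by
        rw [_root_.abs_of_nonneg (by positivity)]
        nlinarith [Nat.cast_nonneg (α := ℝ) k]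
      linarith
    rw [div_mul_div_comm, one_mul]
    apply one_div_le_one_div_of_le (by positivity)
    calc 2*y*Bk^3 = Bk^3*(2*y) := by ring
      _ ≤ Bk^3 * ‖(((((k:ℝ)+1):ℝ):ℂ) + (y:ℂ)*I)^2 - 1‖ := by
          apply mul_le_mul_of_nonneg_left h2y (by positivity)
  have hrnorm : Summable (fun k => ‖r k‖) :=
    Summable.of_nonneg_of_le (fun k => norm_nonneg _) hrbound (hb.mul_left _)
  have hr : Summable r := Summable.of_norm hrnorm
  -- telescoping series
  have htel : Summable (fun k => u k - u (k+1)) := by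
    have he : (fun k => u k - u (k+1)) = (fun k => 2*(f (k+1) + r k)) := by
      funext k
      rw [hid k]; ring
    rw [he]
    exact (hf1.add hr).mul_left 2
  have hu0 : Filter.Tendsto u Filter.atTop (nhds 0) := by
    apply squeeze_zero_norm (a := fun n : ℕ => (1/y) * (1/((n:ℝ)+1)))
    · intro n
      simp only [hudef]
      rw [norm_div, norm_one, norm_mul,
        hw1 n, hw n, abs_aux, abs_aux, div_mul_div_comm, one_mul]
      apply one_div_le_one_div_of_le (by positivity)
      have e1 : y ≤ Real.sqrt ((n:ℝ)^2 + y^2) := by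
        calc y = Real.sqrt (y^2) := by rw [Real.sqrt_sq (le_of_lt hy)]
          _ ≤ _ := Real.sqrt_le_sqrt (by nlinarith)
      have e2 : (n:ℝ)+1 ≤ Real.sqrt (((n:ℝ)+1)^2 + y^2) := by
        calc (n:ℝ)+1 = Real.sqrt (((n:ℝ)+1)^2) := by rw [Real.sqrt_sq (by positivity)]
          _ ≤ _ := Real.sqrt_le_sqrt (by nlinarith)
      calc y*((n:ℝ)+1) ≤ Real.sqrt ((n:ℝ)^2 + y^2) * ((n:ℝ)+1) := by
            apply mul_le_mul_of_nonneg_right e1 (by positivity)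
        _ ≤ _ := by
            apply mul_le_mul_of_nonneg_left e2 (Real.sqrt_nonneg _)
    · have := (tendsto_one_div_add_atTop_nhds_zero_nat).const_mul (1/y)
      simpa using this
  have htelval : ∑' k, (u k - u (k+1)) = u 0 := by
    have h1 := htel.hasSum.tendsto_sum_nat
    have h2 : ∀ n, ∑ i ∈ Finset.range n, (u i - u (i+1)) = u 0 - u n :=
      fun n => Finset.sum_range_sub' u n
    simp only [h2] at h1
    have h3 : Filter.Tendsto (fun n => u 0 - u n) Filter.atTop (nhds (u 0 - 0)) :=
      Filter.Tendsto.sub tendsto_const_nhds hu0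
    rw [sub_zero] at h3
    exact tendsto_nhds_unique h1 h3
  -- splitting the sum
  have hS : S 3 z = f 0 + ((1/2) * u 0 - ∑' k, r k) := by
    have h0 : S 3 z = ∑' k, f k := rfl
    rw [h0, hf.tsum_eq_zero_add]
    congr 1
    calc ∑' k, f (k+1) = ∑' k, ((1/2)*(u k - u (k+1)) - r k) := tsum_congr hid
      _ = (∑' k, (1/2)*(u k - u (k+1))) - ∑' k, r k := Summable.tsum_sub (htel.mul_left _) hr
      _ = (1/2) * ∑' k, (u k - u (k+1)) - ∑' k, r k := by rw [tsum_mul_left]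
      _ = (1/2) * u 0 - ∑' k, r k := by rw [htelval]
  -- imaginary parts
  have hf0 : (f 0).im = 1/y^3 := by
    have e0 : f 0 = 1/((y:ℂ)*I)^3 := by simp [hfdef, hz]
    have e1 : ((y:ℂ)*I)^3 = -(((y^3:ℝ)):ℂ)*I := by
      calc ((y:ℂ)*I)^3 = (y:ℂ)^3*(I^2*I) := by ring
        _ = _ := by rw [Complex.I_sq]; push_cast; ring
    have e2 : f 0 = I/((y^3:ℝ):ℂ) := by
      rw [e0, e1]
      rw [div_eq_div_iff (by simp [Complex.ext_iff]; positivity) (by simp [Complex.ext_iff]; positivity)]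
      calc (1:ℂ)*(y^3:ℝ) = -((I*I)*(y^3:ℝ)) := by rw [Complex.I_mul_I]; ring
        _ = I * (-((y^3:ℝ):ℂ)*I) := by ring
    rw [e2, Complex.div_ofReal_im]
    simp
  have hu0im : ((1/2:ℂ) * u 0).im = -(1/(2*(y^3+y))) := by
    have e0 : u 0 = 1/(-((y^2:ℝ):ℂ) + (y:ℝ)*I) := by
      have : (z+((0:ℕ):ℂ))*(z+((0:ℕ):ℂ)+1) = -((y^2:ℝ):ℂ) + (y:ℝ)*I := by
        rw [hz]
        push_cast
        calc ((y:ℂ)*I+0)*((y:ℂ)*I+0+1) = (y:ℂ)^2*I^2 + (y:ℂ)*I := by ring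
          _ = _ := by rw [Complex.I_sq]; ring
      simp only [hudef]
      rw [this]
    have e1 : (u 0).im = -(y/(y^4+y^2)) := by
      rw [e0, one_div, Complex.inv_im]
      have hre : (-((y^2:ℝ):ℂ) + (y:ℝ)*I).im = y := by simp [← Complex.ofReal_pow]
      have hns : Complex.normSq (-((y^2:ℝ):ℂ) + (y:ℝ)*I) = y^4 + y^2 := by
        simp [Complex.normSq_apply, ← Complex.ofReal_pow]
        ring
      rw [hre, hns]
      ring
    rw [Complex.mul_im, e1]
    simp
    field_simp
  -- tail bound
  have htail : |(∑' k, r k).im| ≤ 1/(2*y^3) := by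
    have c1 : |(∑' k, r k).im| ≤ ‖∑' k, r k‖ := by
      exact Complex.abs_im_le_norm _
    have c2 : ‖∑' k, r k‖ ≤ ∑' k, ‖r k‖ := norm_tsum_le_tsum_norm hrnorm
    have c3 : ∑' k, ‖r k‖ ≤ ∑' k : ℕ, (1/(2*y)) * (1/Real.sqrt (((k:ℝ)+1)^2+y^2)^3) :=
      Summable.tsum_le_tsum hrbound hrnorm (hb.mul_left _)
    have c4 : ∑' k : ℕ, (1/(2*y)) * (1/Real.sqrt (((k:ℝ)+1)^2+y^2)^3)
        = (1/(2*y)) * ∑' k : ℕ, (1/Real.sqrt (((k:ℝ)+1)^2+y^2)^3) := tsum_mul_left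
    have c5 : (1/(2*y)) * (∑' k : ℕ, (1/Real.sqrt (((k:ℝ)+1)^2+y^2)^3)) ≤ (1/(2*y)) * (1/y^2) :=
      mul_le_mul_of_nonneg_left (sum_b_le y hy) (by positivity)
    have c6 : (1/(2*y)) * (1/y^2) = 1/(2*y^3) := by
      field_simp
    linarith
  -- final arithmetic
  have him : (S 3 z).im = 1/y^3 + (-(1/(2*(y^3+y))) - (∑' k, r k).im) := by
    rw [hS]
    rw [Complex.add_im, Complex.sub_im, hf0, hu0im]
  have harith : 1/y^3 - 1/(2*(y^3+y)) - 1/(2*y^3) = 1/(2*y^3*(y^2+1)) := by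
    field_simp
    ring
  have hpos : 0 < (S 3 z).im := by
    have hb1 := abs_le.1 htail
    have : 0 < 1/(2*y^3*(y^2+1)) := by positivity
    rw [him]
    linarith
  refine ⟨hpos, ?_⟩
  have hmul : ((-2 : ℂ) * S 3 z).im = -2 * (S 3 z).im := by
    rw [Complex.mul_im]
    simp
  rw [hmul]
  linarith
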